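/- Let T be a finite tree on vertex set V with vertex weights w : V → ℝ≥0. Let x ∈ V be a vertex with nonempty neighborhood N(x), let H be a simple graph on V all of whose edges join vertices of N(x) and whose restriction to N(x) is a tree, and let y ∈ N(x). Let T' be the graph on V \ {x} whose edge set is the edges of T not incident to x together with the edges of H, and define new weights w' by w'(y) = w(y) + w(x) and w'(u) = w(u) for u ≠ y. Then T' is a tree on V \ {x}, and for every vertex v ∈ V \ {x}, rem_{T',w'}(v) ≥ rem_{T,w}(v). -/

import Mathlib

/-- The graph `G` with vertex `v` deleted (as a graph on the same vertex set,
with `v` isolated): edges of `G` not incident to `v`. -/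
def delVert {V : Type*} (G : SimpleGraph V) (v : V) : SimpleGraph V where
  Adj a b := G.Adj a b ∧ a ≠ v ∧ b ≠ v
  symm := ⟨fun _ _ h => ⟨h.1.symm, h.2.2, h.2.1⟩⟩
  loopless := ⟨fun a h => G.loopless.irrefl a h.1⟩

open Classical in
/-- `compW G w u` is the total weight of the connected component of `u` in `G`. -/
noncomputable def compW {V : Type*} [Fintype V] (G : SimpleGraph V) (w : V → NNReal)
    (u : V) : NNReal :=
  ∑ x ∈ Finset.univ.filter (fun x => G.Reachable u x), w x

open Classical in
/-- `rem T w v = ∑_{u ∈ N(v)} W(T(u,v)) − max_{u ∈ N(v)} W(T(u,v)) + w v`,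
the maximum being `0` when `N(v)` is empty. -/
noncomputable def rem {V : Type*} [Fintype V] (T : SimpleGraph V) (w : V → NNReal)
    (v : V) : NNReal :=
  (∑ u ∈ Finset.univ.filter (fun u => T.Adj v u), compW (delVert T v) w u)
    - (Finset.univ.filter (fun u => T.Adj v u)).sup (fun u => compW (delVert T v) w u)
    + w v

/-- The healed graph: the edges of `T` not incident to `x`, together with the edges
of `H` (the vertex `x` becomes isolated). -/
def healGraph {V : Type*} (T : SimpleGraph V) (x : V) (H : SimpleGraph V) :
    SimpleGraph V where
  Adj a b := (T.Adj a b ∧ a ≠ x ∧ b ≠ x) ∨ H.Adj a b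
  symm := ⟨fun _ _ h =>
    h.elim (fun h' => Or.inl ⟨h'.1.symm, h'.2.2, h'.2.1⟩) (fun h' => Or.inr h'.symm)⟩
  loopless := ⟨fun a h => h.elim (fun h' => T.loopless.irrefl a h'.1) (fun h' => H.loopless.irrefl a h')⟩

/-! ### Auxiliary lemmas -/

section Aux

open SimpleGraph Finset

variable {V : Type*}

lemma delVert_le {G : SimpleGraph V} {v : V} : delVert G v ≤ G := fun _ _ h => h.1

lemma delVert_not_mem_support {G : SimpleGraph V} {v a b : V}
    (p : (delVert G v).Walk a b) (ha : a ≠ v) : v ∉ p.support := by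
  induction p with
  | nil => simpa using ha.symm
  | cons h q ih =>
    rw [SimpleGraph.Walk.support_cons, List.mem_cons]
    push_neg
    exact ⟨ha.symm, ih h.2.2⟩

lemma reachable_delVert_of_not_mem_support {G : SimpleGraph V} {v a b : V}
    (p : G.Walk a b) (hv : v ∉ p.support) : (delVert G v).Reachable a b := by
  induction p with
  | nil => exact SimpleGraph.Reachable.refl _
  | @cons a c b h q ih =>
    rw [SimpleGraph.Walk.support_cons, List.mem_cons] at hv
    push_neg at hv
    have hc : v ∉ q.support := hv.2
    have hadj : (delVert G v).Adj a c :=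
      ⟨h, fun hh => hv.1 hh.symm, fun hh => hc (hh ▸ q.start_mem_support)⟩
    exact hadj.reachable.trans (ih hc)

lemma eq_of_reachable_delVert_center {G : SimpleGraph V} {v z : V}
    (h : (delVert G v).Reachable v z) : v = z := by
  obtain ⟨p⟩ := h
  cases p with
  | nil => rfl
  | cons h q => exact absurd rfl h.2.1

/-- Existence of the "direction" of `z` seen from `v`, in a connected graph. -/
lemma exists_dir {G : SimpleGraph V} (hc : G.Connected) (v z : V) (hz : z ≠ v) :
    ∃ u, G.Adj v u ∧ (delVert G v).Reachable u z := by
  classical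
  obtain ⟨p⟩ := hc.preconnected v z
  obtain ⟨q, hq⟩ := p.toPath
  cases q with
  | nil => exact absurd rfl hz.symm
  | @cons _ u _ h r =>
    rw [SimpleGraph.Walk.cons_isPath_iff] at hq
    exact ⟨u, h, reachable_delVert_of_not_mem_support r hq.2⟩

/-- Uniqueness of the direction, in an acyclic graph. -/
lemma dir_unique {G : SimpleGraph V} (hG : G.IsAcyclic) {v u₁ u₂ z : V}
    (h1 : G.Adj v u₁) (h2 : G.Adj v u₂)
    (r1 : (delVert G v).Reachable u₁ z) (r2 : (delVert G v).Reachable u₂ z) :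
    u₁ = u₂ := by
  classical
  by_contra hne
  obtain ⟨p0⟩ := r2.trans r1.symm
  obtain ⟨p, hp⟩ := p0.toPath
  have hvp : v ∉ p.support := delVert_not_mem_support p h2.ne'
  let q : G.Walk u₂ u₁ := p.mapLe delVert_le
  have hq : q.IsPath := (SimpleGraph.Walk.mapLe_isPath delVert_le).mpr hp
  have hvq : v ∉ q.support := by
    have hid : ⇑(SimpleGraph.Hom.ofLE (delVert_le (G := G) (v := v))) = id := by
      funext a; rfl
    have hsupp : q.support = p.support := by
      simp only [q, SimpleGraph.Walk.mapLe, SimpleGraph.Walk.support_map, hid, List.map_id]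
    rw [hsupp]; exact hvp
  have hP : (SimpleGraph.Walk.cons h2 q).IsPath := by
    rw [SimpleGraph.Walk.cons_isPath_iff]; exact ⟨hq, hvq⟩
  have he : s(u₁, v) ∉ (SimpleGraph.Walk.cons h2 q).edges := by
    rw [SimpleGraph.Walk.edges_cons, List.mem_cons]
    push_neg
    constructor
    · intro hh
      rw [Sym2.eq_iff] at hh
      rcases hh with ⟨h1', -⟩ | ⟨h1', -⟩
      · exact G.loopless.irrefl v (h1' ▸ h1)
      · exact hne h1'
    · intro hmem
      exact hvq (q.snd_mem_support_of_mem_edges hmem)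
  exact hG _ (SimpleGraph.Path.cons_isCycle ⟨SimpleGraph.Walk.cons h2 q, hP⟩ h1.symm he)

open Classical in
lemma compW_congr [Fintype V] {G : SimpleGraph V} (w : V → NNReal) {a b : V}
    (h : G.Reachable a b) : compW G w a = compW G w b := by
  unfold compW
  apply Finset.sum_congr _ (fun _ _ => rfl)
  ext z
  simp only [Finset.mem_filter, Finset.mem_univ, true_and]
  exact ⟨fun hz => h.symm.trans hz, fun hz => h.trans hz⟩

open Classical in
lemma sum_compW [Fintype V] {G : SimpleGraph V} (hG : G.IsTree) (w : V → NNReal) (v : V) :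
    (∑ u ∈ Finset.univ.filter (fun u => G.Adj v u), compW (delVert G v) w u) + w v
      = ∑ z, w z := by
  have key : (∑ u ∈ Finset.univ.filter (fun u => G.Adj v u), compW (delVert G v) w u)
      = ∑ z, (if z = v then 0 else w z) := by
    have h1 : ∀ u, compW (delVert G v) w u
        = ∑ z, (if (delVert G v).Reachable u z then w z else 0) := by
      intro u; unfold compW; rw [Finset.sum_filter]
    rw [Finset.sum_congr rfl (fun u _ => h1 u), Finset.sum_comm]
    apply Finset.sum_congr rfl
    intro z _
    by_cases hz : z = v
    · subst hz
      rw [if_pos rfl]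
      apply Finset.sum_eq_zero
      intro u hu
      rw [Finset.mem_filter] at hu
      rw [if_neg]
      intro hre
      exact hu.2.ne (eq_of_reachable_delVert_center hre.symm)
    · rw [if_neg hz]
      obtain ⟨u₀, hadj, hre⟩ := exists_dir hG.isConnected v z hz
      rw [Finset.sum_eq_single u₀]
      · rw [if_pos hre]
      · intro u hu hne
        rw [Finset.mem_filter] at hu
        rw [if_neg]
        intro hre'
        exact hne (dir_unique hG.IsAcyclic hu.2 hadj hre' hre)
      · intro h0
        exact absurd (Finset.mem_filter.mpr ⟨Finset.mem_univ _, hadj⟩) h0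
  rw [key]
  have h2 : w v = ∑ z, (if z = v then w z else 0) := by
    rw [Finset.sum_ite_eq' Finset.univ v w, if_pos (Finset.mem_univ v)]
  rw [h2, ← Finset.sum_add_distrib]
  apply Finset.sum_congr rfl
  intro z _
  by_cases hz : z = v <;> simp [hz]

open Classical in
lemma rem_eq [Fintype V] {G : SimpleGraph V} (hG : G.IsTree) (w : V → NNReal) (v : V) :
    rem G w v = (∑ z, w z)
      - (Finset.univ.filter (fun u => G.Adj v u)).sup (fun u => compW (delVert G v) w u) := by
  unfold rem
  have hms : (Finset.univ.filter (fun u => G.Adj v u)).sup (fun u => compW (delVert G v) w u)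
      ≤ ∑ u ∈ Finset.univ.filter (fun u => G.Adj v u), compW (delVert G v) w u :=
    Finset.sup_le fun u hu => Finset.single_le_sum (fun _ _ => zero_le) hu
  rw [tsub_add_eq_add_tsub hms, sum_compW hG w v]

lemma reach_iff_of_invariant {W : Type*} {G : SimpleGraph W} (Q : W → Prop)
    (h : ∀ p q, G.Adj p q → (Q p ↔ Q q)) {s t : W} (hr : G.Reachable s t) : Q s ↔ Q t := by
  obtain ⟨p⟩ := hr
  induction p with
  | nil => exact Iff.rfl
  | cons ha q ih => exact (h _ _ ha).trans ih

lemma reachable_of_walk_map {W W' : Type*} {G : SimpleGraph W} {G' : SimpleGraph W'}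
    (f : W → W') (h : ∀ p q, G.Adj p q → G'.Reachable (f p) (f q)) {s t : W}
    (hr : G.Reachable s t) : G'.Reachable (f s) (f t) := by
  obtain ⟨p⟩ := hr
  induction p with
  | nil => exact SimpleGraph.Reachable.refl _
  | cons ha q ih => exact (h _ _ ha).trans ih

lemma sym2_coe_inj {α : Type*} {s : Set α} {p q a b : ↥s}
    (h : s((p : α), (q : α)) = s((a : α), (b : α))) : s(p, q) = s(a, b) := by
  rw [Sym2.eq_iff] at h ⊢
  rcases h with ⟨h1, h2⟩ | ⟨h1, h2⟩
  · exact Or.inl ⟨Subtype.ext h1, Subtype.ext h2⟩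
  · exact Or.inr ⟨Subtype.ext h1, Subtype.ext h2⟩

end Aux

set_option maxHeartbeats 2000000 in
open Classical in
theorem rem_nondecreasing_over_heal
    {V : Type*} [Fintype V] (T : SimpleGraph V) (hT : T.IsTree)
    (w : V → NNReal)
    (x : V) (hx : (T.neighborSet x).Nonempty)
    (H : SimpleGraph V)
    (hH : ∀ a b : V, H.Adj a b → a ∈ T.neighborSet x ∧ b ∈ T.neighborSet x)
    (hHtree : (H.induce (T.neighborSet x)).IsTree)
    (y : V) (hy : y ∈ T.neighborSet x) :
    ((healGraph T x H).induce ({x}ᶜ : Set V)).IsTree ∧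
    ∀ v : ({x}ᶜ : Set V),
      rem T w (v : V) ≤
        rem ((healGraph T x H).induce ({x}ᶜ : Set V))
          (fun u => Function.update w y (w y + w x) (u : V)) v := by
  set N : Set V := T.neighborSet x with hNdef
  set S : Set V := ({x}ᶜ : Set V) with hSdef
  set T' : SimpleGraph ↥S := (healGraph T x H).induce S with hT'def
  have hmemS : ∀ {a : V}, a ≠ x → a ∈ S := fun h => h
  have hSne : ∀ (a : ↥S), (a : V) ≠ x := fun a => a.2
  have hNadj : ∀ {a : V}, a ∈ N → T.Adj x a := fun h => h
  have hadjT' : ∀ a b : ↥S,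
      T'.Adj a b ↔ ((T.Adj ↑a ↑b ∧ (a : V) ≠ x ∧ (b : V) ≠ x) ∨ H.Adj ↑a ↑b) :=
    fun _ _ => Iff.rfl
  have hyx : y ≠ x := (hNadj hy).ne'
  have hyS : y ∈ S := hmemS hyx
  -- lifting reachability in the induced H-tree to T'
  have liftH : ∀ p q : ↥N, T'.Reachable ⟨↑p, hmemS (hNadj p.2).ne'⟩ ⟨↑q, hmemS (hNadj q.2).ne'⟩ := by
    intro p q
    refine reachable_of_walk_map (fun z : ↥N => (⟨↑z, hmemS (hNadj z.2).ne'⟩ : ↥S)) ?_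
      (hHtree.isConnected p q)
    intro p q h
    exact SimpleGraph.Adj.reachable (Or.inr (h : H.Adj ↑p ↑q))
  -- connectivity of T'
  have key : ∀ (n : ℕ) (c d : V) (hc : c ∈ S) (hd : d ∈ S) (p : T.Walk c d),
      p.length = n → T'.Reachable ⟨c, hc⟩ ⟨d, hd⟩ := by
    intro n
    induction n using Nat.strong_induction_on with
    | _ n ih =>
      intro c d hc hd p hl
      cases p with
      | nil => exact SimpleGraph.Reachable.refl _
      | @cons _ e _ h q =>
        by_cases he : e = x
        · subst he
          cases q with
          | nil => exact absurd rfl hd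
          | @cons _ f _ h₂ r =>
            have hf : f ∈ S := hmemS h₂.ne'
            have r1 : T'.Reachable ⟨c, hc⟩ ⟨f, hf⟩ := liftH ⟨c, h.symm⟩ ⟨f, h₂⟩
            have hlen : r.length < n := by
              simp only [SimpleGraph.Walk.length_cons] at hl; omega
            exact r1.trans (ih r.length hlen f d hf hd r rfl)
        · have he' : e ∈ S := hmemS he
          have hadj : T'.Adj ⟨c, hc⟩ ⟨e, he'⟩ := Or.inl ⟨h, hc, he⟩
          have hlen : q.length < n := by
            simp only [SimpleGraph.Walk.length_cons] at hl; omega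
          exact hadj.reachable.trans (ih q.length hlen e d he' hd q rfl)
  have hconn : T'.Connected := by
    have : Nonempty ↥S := ⟨⟨y, hyS⟩⟩
    refine SimpleGraph.Connected.mk ?_
    rintro ⟨a, ha⟩ ⟨b, hb⟩
    obtain ⟨p⟩ := hT.isConnected a b
    exact key p.length a b ha hb p rfl
  -- acyclicity of T'
  have hacy : T'.IsAcyclic := by
    rw [SimpleGraph.isAcyclic_iff_forall_adj_isBridge]
    intro a b hab
    rw [SimpleGraph.isBridge_iff]
    intro hreach
    have hedge_ne : ∀ p q : ↥S, (T' \ SimpleGraph.fromEdgeSet {s(a, b)}).Adj p q →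
        T'.Adj p q ∧ s(p, q) ≠ s(a, b) := by
      intro p q h
      rw [SimpleGraph.sdiff_adj, SimpleGraph.fromEdgeSet_adj] at h
      exact ⟨h.1, fun hh => h.2 ⟨by simpa using hh, h.1.ne⟩⟩
    have hab' : (T.Adj ↑a ↑b ∧ (a : V) ≠ x ∧ (b : V) ≠ x) ∨ H.Adj ↑a ↑b := hab
    rcases hab' with ⟨hTe, -, -⟩ | hHe
    · -- T-edge case
      have hbr : ¬(T \ SimpleGraph.fromEdgeSet {s((a : V), (b : V))}).Reachable ↑a ↑b :=
        (SimpleGraph.isBridge_iff.mp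
          ((SimpleGraph.isAcyclic_iff_forall_adj_isBridge.mp hT.IsAcyclic) hTe))
      set Q : ↥S → Prop :=
        fun z => (T \ SimpleGraph.fromEdgeSet {s((a : V), (b : V))}).Reachable ↑a ↑z with hQdef
      have hstep : ∀ p q : ↥S, (T' \ SimpleGraph.fromEdgeSet {s(a, b)}).Adj p q → (Q p ↔ Q q) := by
        intro p q h
        obtain ⟨h1, hne⟩ := hedge_ne p q h
        have hr : (T \ SimpleGraph.fromEdgeSet {s((a : V), (b : V))}).Reachable ↑p ↑q := by
          rcases (h1 : _ ∨ _) with ⟨hpq, -, -⟩ | hpq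
          · refine SimpleGraph.Adj.reachable ⟨hpq, ?_⟩
            rw [SimpleGraph.fromEdgeSet_adj]
            rintro ⟨hm, -⟩
            rw [Set.mem_singleton_iff] at hm
            exact hne (sym2_coe_inj hm)
          · have hpx : (T \ SimpleGraph.fromEdgeSet {s((a : V), (b : V))}).Adj ↑p x := by
              refine ⟨(hNadj (hH _ _ hpq).1).symm, ?_⟩
              rw [SimpleGraph.fromEdgeSet_adj]
              rintro ⟨hm, -⟩
              rw [Set.mem_singleton_iff, Sym2.eq_iff] at hm
              rcases hm with ⟨-, hm2⟩ | ⟨-, hm2⟩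
              · exact hSne b hm2.symm
              · exact hSne a hm2.symm
            have hxq : (T \ SimpleGraph.fromEdgeSet {s((a : V), (b : V))}).Adj x ↑q := by
              refine ⟨hNadj (hH _ _ hpq).2, ?_⟩
              rw [SimpleGraph.fromEdgeSet_adj]
              rintro ⟨hm, -⟩
              rw [Set.mem_singleton_iff, Sym2.eq_iff] at hm
              rcases hm with ⟨hm1, -⟩ | ⟨hm1, -⟩
              · exact hSne a hm1.symm
              · exact hSne b hm1.symm
            exact hpx.reachable.trans hxq.reachable
        exact ⟨fun hq => hq.trans hr, fun hq => hq.trans hr.symm⟩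
      have hQa : Q a := SimpleGraph.Reachable.refl _
      exact hbr ((reach_iff_of_invariant Q hstep hreach).mp hQa)
    · -- H-edge case
      have haN : (a : V) ∈ N := (hH _ _ hHe).1
      have hbN : (b : V) ∈ N := (hH _ _ hHe).2
      have hHab : (H.induce N).Adj ⟨↑a, haN⟩ ⟨↑b, hbN⟩ := hHe
      have hbrH : ¬((H.induce N) \
          SimpleGraph.fromEdgeSet {s((⟨↑a, haN⟩ : ↥N), (⟨↑b, hbN⟩ : ↥N))}).Reachable
          ⟨↑a, haN⟩ ⟨↑b, hbN⟩ :=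
        (SimpleGraph.isBridge_iff.mp
          ((SimpleGraph.isAcyclic_iff_forall_adj_isBridge.mp hHtree.IsAcyclic) hHab))
      have hdir : ∀ z : ↥S, ∃ u, T.Adj x u ∧ (delVert T x).Reachable u ↑z :=
        fun z => exists_dir hT.isConnected x ↑z (hSne z)
      choose d hd1 hd2 using hdir
      set D : ↥S → ↥N := fun z => ⟨d z, hd1 z⟩ with hDdef
      have hDadj : ∀ p q : ↥S, T.Adj ↑p ↑q → D p = D q := by
        intro p q h
        apply Subtype.ext
        exact dir_unique hT.IsAcyclic (hd1 p) (hd1 q)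
          ((hd2 p).trans (SimpleGraph.Adj.reachable ⟨h, hSne p, hSne q⟩)) (hd2 q)
      have hDN : ∀ (z : ↥S) (hz : (z : V) ∈ N), d z = ↑z := fun z hz =>
        dir_unique hT.IsAcyclic (hd1 z) (hNadj hz) (hd2 z) (SimpleGraph.Reachable.refl _)
      set Q : ↥S → Prop := fun z => ((H.induce N) \
          SimpleGraph.fromEdgeSet {s((⟨↑a, haN⟩ : ↥N), (⟨↑b, hbN⟩ : ↥N))}).Reachable
          ⟨↑a, haN⟩ (D z) with hQdef
      have hstep : ∀ p q : ↥S, (T' \ SimpleGraph.fromEdgeSet {s(a, b)}).Adj p q → (Q p ↔ Q q) := by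
        intro p q h
        obtain ⟨h1, hne⟩ := hedge_ne p q h
        rcases (h1 : _ ∨ _) with ⟨hpq, -, -⟩ | hpq
        · have hD := hDadj p q hpq
          simp only [hQdef, hD]
        · have hpN : (p : V) ∈ N := (hH _ _ hpq).1
          have hqN : (q : V) ∈ N := (hH _ _ hpq).2
          have hdp : D p = ⟨↑p, hpN⟩ := Subtype.ext (hDN p hpN)
          have hdq : D q = ⟨↑q, hqN⟩ := Subtype.ext (hDN q hqN)
          have hr : ((H.induce N) \
              SimpleGraph.fromEdgeSet {s((⟨↑a, haN⟩ : ↥N), (⟨↑b, hbN⟩ : ↥N))}).Adj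
              ⟨↑p, hpN⟩ ⟨↑q, hqN⟩ := by
            refine ⟨hpq, ?_⟩
            rw [SimpleGraph.fromEdgeSet_adj]
            rintro ⟨hm, -⟩
            rw [Set.mem_singleton_iff] at hm
            apply hne
            have hm' : s((p : V), (q : V)) = s((a : V), (b : V)) := by
              have hmm := congrArg (Sym2.map Subtype.val) hm
              simpa using hmm
            exact sym2_coe_inj hm'
          rw [hQdef]
          simp only [hdp, hdq]
          exact ⟨fun hq => hq.trans hr.reachable, fun hq => hq.trans hr.reachable.symm⟩
      have hQa : Q a := by
        rw [hQdef]
        simp only [show D a = ⟨↑a, haN⟩ from Subtype.ext (hDN a haN)]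
        exact SimpleGraph.Reachable.refl _
      have hQb : Q b := (reach_iff_of_invariant Q hstep hreach).mp hQa
      rw [hQdef] at hQb
      simp only [show D b = ⟨↑b, hbN⟩ from Subtype.ext (hDN b hbN)] at hQb
      exact hbrH hQb
  have hT'tree : T'.IsTree := ⟨hconn, hacy⟩
  refine ⟨hT'tree, ?_⟩
  intro v
  set w' : ↥S → NNReal := fun u => Function.update w y (w y + w x) (u : V) with hw'def
  have lift2 : ∀ p q : ↥S, (delVert T' v).Reachable p q →
      (delVert T ↑v).Reachable ↑p ↑q := by
    intro p q hr
    refine reachable_of_walk_map (Subtype.val) ?_ hr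
    intro p q h
    obtain ⟨h1, hp, hq⟩ := h
    have hp' : (p : V) ≠ ↑v := fun hh => hp (Subtype.ext hh)
    have hq' : (q : V) ≠ ↑v := fun hh => hq (Subtype.ext hh)
    have hvx : (↑v : V) ≠ x := hSne v
    rcases (h1 : _ ∨ _) with ⟨hpq, -, -⟩ | hpq
    · exact SimpleGraph.Adj.reachable ⟨hpq, hp', hq'⟩
    · have a1 : (delVert T ↑v).Adj ↑p x :=
        ⟨(hNadj (hH _ _ hpq).1).symm, hp', fun hh => hvx hh.symm⟩
      have a2 : (delVert T ↑v).Adj x ↑q :=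
        ⟨hNadj (hH _ _ hpq).2, fun hh => hvx hh.symm, hq'⟩
      exact a1.reachable.trans a2.reachable
  -- totals agree
  have htotal : (∑ z : ↥S, w' z) = ∑ z, w z := by
    have hiff : ∀ z : V, z ∈ ({x} : Finset V)ᶜ ↔ z ∈ S := by
      intro z
      simp [hSdef, Finset.mem_compl]
    have h1 : (∑ z : ↥S, w' z)
        = ∑ z ∈ ({x} : Finset V)ᶜ, Function.update w y (w y + w x) z :=
      (Finset.sum_subtype _ hiff (Function.update w y (w y + w x))).symm
    have hyc : y ∈ ({x} : Finset V)ᶜ := by simp [hyx]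
    have hxc : x ∉ ({x} : Finset V)ᶜ := by simp
    rw [h1, ← Finset.add_sum_erase _ _ hyc, Function.update_self]
    have h3 : ∑ z ∈ (({x} : Finset V)ᶜ).erase y, Function.update w y (w y + w x) z
        = ∑ z ∈ (({x} : Finset V)ᶜ).erase y, w z := by
      apply Finset.sum_congr rfl
      intro z hz
      exact Function.update_of_ne (Finset.ne_of_mem_erase hz) _ _
    rw [h3]
    have h4 : w y + w x + ∑ z ∈ (({x} : Finset V)ᶜ).erase y, w z
        = w x + ∑ z ∈ ({x} : Finset V)ᶜ, w z := by
      rw [← Finset.add_sum_erase _ _ hyc]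
      ring
    rw [h4, ← Finset.sum_insert hxc]
    apply Finset.sum_congr _ (fun _ _ => rfl)
    ext z
    simp [eq_comm]
  -- sup comparison
  have hsup : (Finset.univ.filter (fun u => T'.Adj v u)).sup
        (fun u => compW (delVert T' v) w' u)
      ≤ (Finset.univ.filter (fun u => T.Adj ↑v u)).sup
        (fun u => compW (delVert T ↑v) w u) := by
    apply Finset.sup_le
    intro u hu
    rw [Finset.mem_filter] at hu
    have huv : u ≠ v := fun hh => T'.loopless.irrefl v (hh ▸ hu.2)
    have huv' : (u : V) ≠ ↑v := fun hh => huv (Subtype.ext hh)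
    obtain ⟨u₀, hadj₀, hr₀⟩ := exists_dir hT.isConnected ↑v ↑u huv'
    have hb : compW (delVert T' v) w' u ≤ compW (delVert T ↑v) w ↑u := by
      set A : Finset V :=
        (Finset.univ.filter (fun z : ↥S => (delVert T' v).Reachable u z)).image
          Subtype.val with hA
      set B : Finset V :=
        Finset.univ.filter (fun z : V => (delVert T ↑v).Reachable ↑u z) with hB
      have hAB : A ⊆ B := by
        intro z hz
        rw [hA, Finset.mem_image] at hz
        obtain ⟨z', hz', rfl⟩ := hz
        rw [Finset.mem_filter] at hz'
        exact Finset.mem_filter.mpr ⟨Finset.mem_univ _, lift2 _ _ hz'.2⟩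
      have hxA : x ∉ A := by
        rw [hA, Finset.mem_image]
        rintro ⟨z', -, hz⟩
        exact hSne z' hz
      have hvB : (↑v : V) ∉ B := by
        rw [hB, Finset.mem_filter]
        rintro ⟨-, hr⟩
        exact huv' (eq_of_reachable_delVert_center hr.symm).symm
      have hLHS : compW (delVert T' v) w' u = ∑ z ∈ A, Function.update w y (w y + w x) z := by
        rw [hA, Finset.sum_image (fun z1 _ z2 _ h => Subtype.ext h)]
        simp only [compW, hw'def]
        apply Finset.sum_congr _ (fun _ _ => rfl)
        ext z
        simp
      have hRHS : compW (delVert T ↑v) w ↑u = ∑ z ∈ B, w z := rfl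
      rw [hLHS, hRHS]
      by_cases hyA : y ∈ A
      · have hyB : y ∈ B := hAB hyA
        have hyv : y ≠ ↑v := by
          intro hh
          rw [hh] at hyB
          exact hvB hyB
        have hxB : x ∈ B := by
          rw [hB, Finset.mem_filter]
          refine ⟨Finset.mem_univ _, ?_⟩
          have hradj : (delVert T ↑v).Adj y x :=
            ⟨(hNadj hy).symm, hyv, fun hh => (hSne v) hh.symm⟩
          have hyB' : (delVert T ↑v).Reachable ↑u y := (Finset.mem_filter.mp hyB).2
          exact hyB'.trans hradj.reachable
        have hsplit : ∑ z ∈ A, Function.update w y (w y + w x) z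
            = w x + ∑ z ∈ A, w z := by
          rw [← Finset.add_sum_erase _ _ hyA, Function.update_self,
            ← Finset.add_sum_erase _ w hyA]
          have : ∑ z ∈ A.erase y, Function.update w y (w y + w x) z
              = ∑ z ∈ A.erase y, w z := by
            apply Finset.sum_congr rfl
            intro z hz
            exact Function.update_of_ne (Finset.ne_of_mem_erase hz) _ _
          rw [this]
          ring
        rw [hsplit, ← Finset.sum_insert hxA]
        apply Finset.sum_le_sum_of_subset
        exact Finset.insert_subset hxB hAB
      · have hcongr : ∑ z ∈ A, Function.update w y (w y + w x) z = ∑ z ∈ A, w z := by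
          apply Finset.sum_congr rfl
          intro z hz
          exact Function.update_of_ne (by rintro rfl; exact hyA hz) _ _
        rw [hcongr]
        exact Finset.sum_le_sum_of_subset hAB
    calc compW (delVert T' v) w' u ≤ compW (delVert T ↑v) w ↑u := hb
      _ = compW (delVert T ↑v) w u₀ := compW_congr w hr₀.symm
      _ ≤ (Finset.univ.filter (fun u => T.Adj ↑v u)).sup
            (fun u => compW (delVert T ↑v) w u) :=
          Finset.le_sup (Finset.mem_filter.mpr ⟨Finset.mem_univ _, hadj₀⟩)
  rw [rem_eq hT w ↑v, rem_eq hT'tree w' v, htotal]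
  exact tsub_le_tsub_left hsup _
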